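/- Let t* > 1 and σ₀, σ₁ > 0 be real, let f̃(t) = (1, t)ᵀ/σ(t) where σ(0) = σ₀ and σ(1) = σ₁, let c = (1, t*)ᵀ, and for π ∈ (0,1) let M(π) = (1−π)·f̃(0)f̃(0)ᵀ + π·f̃(1)f̃(1)ᵀ. Then M(π) is invertible with cᵀ M(π)⁻¹ c = (t*−1)²σ₀²/(1−π) + (t*)²σ₁²/π, and this quantity attains its minimum over π ∈ (0,1) uniquely at π* = t*σ₁/(t*σ₁ + (t*−1)σ₀), with minimal value (t*σ₁ + (t*−1)σ₀)². -/

import Mathlib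

open Matrix

lemma aux_form (t σ₀ σ₁ π : ℝ) (hσ₀ : 0 < σ₀) (hσ₁ : 0 < σ₁)
    (hπ : 0 < π) (hπ1 : π < 1) :
    IsUnit (!![(1-π)*σ₀⁻¹^2 + π*σ₁⁻¹^2, π*σ₁⁻¹^2; π*σ₁⁻¹^2, π*σ₁⁻¹^2] : Matrix (Fin 2) (Fin 2) ℝ) ∧
    ![1,t] ⬝ᵥ ((!![(1-π)*σ₀⁻¹^2 + π*σ₁⁻¹^2, π*σ₁⁻¹^2; π*σ₁⁻¹^2, π*σ₁⁻¹^2] : Matrix (Fin 2) (Fin 2) ℝ)⁻¹ *ᵥ ![1,t])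
      = (t-1)^2*σ₀^2/(1-π) + t^2*σ₁^2/π := by
  set A : Matrix (Fin 2) (Fin 2) ℝ :=
    !![(1-π)*σ₀⁻¹^2 + π*σ₁⁻¹^2, π*σ₁⁻¹^2; π*σ₁⁻¹^2, π*σ₁⁻¹^2] with hA
  have hdet : A.det = (1-π)*π*σ₀⁻¹^2*σ₁⁻¹^2 := by
    simp [hA, Matrix.det_fin_two_of]; ring
  have hdetne : A.det ≠ 0 := by
    rw [hdet]
    have h1π : (0:ℝ) < 1 - π := by linarith
    have : (0:ℝ) < (1-π)*π*σ₀⁻¹^2*σ₁⁻¹^2 := by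
      apply mul_pos (mul_pos (mul_pos h1π hπ) (by positivity)) (by positivity)
    exact ne_of_gt this
  have hunit : IsUnit A := by
    rw [Matrix.isUnit_iff_isUnit_det, isUnit_iff_ne_zero]; exact hdetne
  refine ⟨hunit, ?_⟩
  rw [Matrix.inv_def, hdet]
  have hadj : A.adjugate = !![π*σ₁⁻¹^2, -(π*σ₁⁻¹^2); -(π*σ₁⁻¹^2), (1-π)*σ₀⁻¹^2 + π*σ₁⁻¹^2] := by
    rw [hA, Matrix.adjugate_fin_two_of]
  rw [hadj]
  have h1 : Ring.inverse ((1-π)*π*σ₀⁻¹^2*σ₁⁻¹^2) = ((1-π)*π*σ₀⁻¹^2*σ₁⁻¹^2)⁻¹ :=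
    Ring.inverse_eq_inv _
  rw [h1]
  simp [Matrix.mulVec, dotProduct, Fin.sum_univ_two]
  have h1π : (1:ℝ) - π ≠ 0 := by linarith
  have hπ' : π ≠ 0 := ne_of_gt hπ
  have h0 : σ₀ ≠ 0 := ne_of_gt hσ₀
  have h1 : σ₁ ≠ 0 := ne_of_gt hσ₁
  field_simp
  ring

/-- The `c`-optimal two-point design for extrapolation at `t* > 1` in the
weighted marginal model with regression `f̃(s) = (1,s)ᵀ/σ(s)`: the design with
weight `1−π` at `0` and `π` at `1` has `c`-criterion
`(t*−1)²σ₀²/(1−π) + (t*)²σ₁²/π`, minimized uniquely at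
`π* = t*σ₁/(t*σ₁ + (t*−1)σ₀)` with minimal value `(t*σ₁ + (t*−1)σ₀)²`. -/
theorem c_opt_two_point_design_weighted (t σ₀ σ₁ : ℝ)
    (ht : 1 < t) (hσ₀ : 0 < σ₀) (hσ₁ : 0 < σ₁)
    (σ : ℝ → ℝ) (hσ0 : σ 0 = σ₀) (hσ1 : σ 1 = σ₁)
    (ftil : ℝ → Fin 2 → ℝ) (hftil : ∀ s, ftil s = (σ s)⁻¹ • ![1, s])
    (c : Fin 2 → ℝ) (hc : c = ![1, t])
    (M : ℝ → Matrix (Fin 2) (Fin 2) ℝ)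
    (hM : ∀ π, M π = (1 - π) • vecMulVec (ftil 0) (ftil 0)
            + π • vecMulVec (ftil 1) (ftil 1)) :
    (∀ π ∈ Set.Ioo (0:ℝ) 1,
        IsUnit (M π) ∧
          c ⬝ᵥ ((M π)⁻¹ *ᵥ c) = (t - 1)^2 * σ₀^2 / (1 - π) + t^2 * σ₁^2 / π) ∧
      t * σ₁ / (t * σ₁ + (t - 1) * σ₀) ∈ Set.Ioo (0:ℝ) 1 ∧
      c ⬝ᵥ ((M (t * σ₁ / (t * σ₁ + (t - 1) * σ₀)))⁻¹ *ᵥ c)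
          = (t * σ₁ + (t - 1) * σ₀)^2 ∧
      ∀ π ∈ Set.Ioo (0:ℝ) 1, π ≠ t * σ₁ / (t * σ₁ + (t - 1) * σ₀) →
        c ⬝ᵥ ((M (t * σ₁ / (t * σ₁ + (t - 1) * σ₀)))⁻¹ *ᵥ c)
          < c ⬝ᵥ ((M π)⁻¹ *ᵥ c) := by
  have h0 : σ₀ ≠ 0 := ne_of_gt hσ₀
  have h1 : σ₁ ≠ 0 := ne_of_gt hσ₁
  have hMπ : ∀ π : ℝ, M π =
      !![(1-π)*σ₀⁻¹^2 + π*σ₁⁻¹^2, π*σ₁⁻¹^2; π*σ₁⁻¹^2, π*σ₁⁻¹^2] := by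
    intro π
    rw [hM]
    ext i j
    fin_cases i <;> fin_cases j <;>
      simp [hftil, hσ0, hσ1, vecMulVec, sq, mul_inv]
  have hmain : ∀ π ∈ Set.Ioo (0:ℝ) 1,
      IsUnit (M π) ∧
        c ⬝ᵥ ((M π)⁻¹ *ᵥ c) = (t - 1)^2 * σ₀^2 / (1 - π) + t^2 * σ₁^2 / π := by
    intro π hπ
    obtain ⟨h2, h3⟩ := aux_form t σ₀ σ₁ π hσ₀ hσ₁ hπ.1 hπ.2
    rw [hMπ, hc]
    exact ⟨h2, h3⟩
  -- π* facts
  have hS : (0:ℝ) < t * σ₁ + (t - 1) * σ₀ := by nlinarith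
  have hb : (0:ℝ) < t * σ₁ := by nlinarith
  have ha : (0:ℝ) < (t - 1) * σ₀ := by nlinarith
  set p : ℝ := t * σ₁ / (t * σ₁ + (t - 1) * σ₀) with hp
  have hpIoo : p ∈ Set.Ioo (0:ℝ) 1 := by
    constructor
    · exact div_pos hb hS
    · rw [hp, div_lt_one hS]; linarith
  have h1p : 1 - p = (t - 1) * σ₀ / (t * σ₁ + (t - 1) * σ₀) := by
    rw [hp]; field_simp; ring
  have hval : c ⬝ᵥ ((M p)⁻¹ *ᵥ c) = (t * σ₁ + (t - 1) * σ₀)^2 := by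
    rw [(hmain p hpIoo).2, h1p, hp]
    rw [div_div_eq_mul_div, div_div_eq_mul_div]
    field_simp
    ring
  refine ⟨hmain, hpIoo, hval, ?_⟩
  intro π hπ hne
  rw [hval, (hmain π hπ).2]
  have hπ0 := hπ.1
  have hπ1 : (0:ℝ) < 1 - π := by linarith [hπ.2]
  have hdiff : (t - 1)^2 * σ₀^2 / (1 - π) + t^2 * σ₁^2 / π - (t * σ₁ + (t - 1) * σ₀)^2
      = ((t * σ₁ + (t - 1) * σ₀) * π - t * σ₁)^2 / (π * (1 - π)) := by
    field_simp
    ring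
  have hnum : (t * σ₁ + (t - 1) * σ₀) * π - t * σ₁ ≠ 0 := by
    intro h
    apply hne
    rw [hp, eq_div_iff (ne_of_gt hS)]
    linarith
  have : 0 < ((t * σ₁ + (t - 1) * σ₀) * π - t * σ₁)^2 / (π * (1 - π)) :=
    div_pos (by positivity) (mul_pos hπ0 hπ1)
  linarith
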